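/- For every natural number n, ∑_{k=0}^n (-1)^k · 2^{n-k} · L_{k+1} = (-1)^n · F_{n+1} (as integers). -/

import Mathlib

def lucas : ℕ → ℕ
  | 0 => 2
  | 1 => 1
  | n + 2 => lucas (n + 1) + lucas n

lemma lucas_fib : ∀ n, lucas (n + 1) + Nat.fib n = Nat.fib (n + 2) + Nat.fib n + Nat.fib n
  | 0 => rfl
  | 1 => rfl
  | n + 2 => by
    have h1 := lucas_fib n
    have h2 := lucas_fib (n + 1)
    simp only [lucas, Nat.fib_add_two] at *
    omega

theorem alt_sum_two (n : ℕ) :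
    ∑ k ∈ Finset.range (n + 1), (-1 : ℤ) ^ k * 2 ^ (n - k) * lucas (k + 1) =
      (-1) ^ n * Nat.fib (n + 1) := by
  induction n with
  | zero => simp [lucas]
  | succ n ih =>
    rw [Finset.sum_range_succ]
    have hs : ∀ k ∈ Finset.range (n + 1),
        (-1 : ℤ) ^ k * 2 ^ (n + 1 - k) * lucas (k + 1)
        = 2 * ((-1 : ℤ) ^ k * 2 ^ (n - k) * lucas (k + 1)) := by
      intro k hk
      rw [Finset.mem_range] at hk
      have : n + 1 - k = (n - k) + 1 := by omega
      rw [this]; ring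
    rw [Finset.sum_congr rfl hs, ← Finset.mul_sum, ih]
    have hl := lucas_fib (n + 1)
    have hf : Nat.fib (n + 2) = Nat.fib n + Nat.fib (n + 1) := Nat.fib_add_two
    have hf3 : Nat.fib (n + 3) = Nat.fib (n + 1) + Nat.fib (n + 2) := Nat.fib_add_two
    have : (lucas (n + 2) : ℤ) = 2 * Nat.fib (n + 1) + Nat.fib (n + 2) := by
      push_cast [show n + 1 + 2 = n + 3 from rfl, show n + 1 + 1 = n + 2 from rfl] at hl hf hf3 ⊢
      omega
    simp only [Nat.add_sub_cancel, Nat.sub_self, pow_zero, pow_succ, this]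
    push_cast [hf]
    ring
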